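/- Quantum L² smooth support uncertainty principle, commutative finite-dimensional case: if k > 0, F is a k-transform, and moreover F* ∘ F = k • id on Fin n → ℂ, then for every nonzero x : Fin n → ℂ and all ε, η ∈ [0,1] with ε + η ≤ 1, S_ε^{2,d}(x) * S_η^{2,τ}(F x) ≥ k * (1 − ε − η)². -/

import Mathlib

open Finset Pointwise

/-- Weighted `p`-norm on `Fin n → ℂ` with weight `d`. -/
noncomputable def wnorm {n : ℕ} (d : Fin n → ℝ) (p : ℝ) (x : Fin n → ℂ) : ℝ :=
  (∑ i, d i * ‖x i‖ ^ p) ^ (1 / p)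

/-- Sup (infinity) norm on `Fin n → ℂ`. -/
noncomputable def inorm {n : ℕ} (x : Fin n → ℂ) : ℝ :=
  ⨆ i, ‖x i‖

/-- `G` is the adjoint of `F` with respect to the weighted inner products with
weights `d` and `τ`. -/
def IsAdjointPair {n m : ℕ} (d : Fin n → ℝ) (τ : Fin m → ℝ)
    (F : (Fin n → ℂ) →ₗ[ℂ] (Fin m → ℂ)) (G : (Fin m → ℂ) →ₗ[ℂ] (Fin n → ℂ)) : Prop :=
  ∀ (x : Fin n → ℂ) (u : Fin m → ℂ),
    ∑ j, (τ j : ℂ) * (starRingEnd ℂ) (F x j) * u j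
      = ∑ i, (d i : ℂ) * (starRingEnd ℂ) (x i) * G u i

/-- The `(p, ε)` smooth support of `x` with respect to the weight `d`. -/
noncomputable def smoothSupp {n : ℕ} (d : Fin n → ℝ) (p ε : ℝ) (x : Fin n → ℂ) : ℝ :=
  sInf { s : ℝ | ∃ h : Fin n → ℝ, (∀ i, 0 ≤ h i) ∧ (∀ i, h i ≤ 1) ∧
    wnorm d p (fun i => ((1 - h i : ℝ) : ℂ) * x i) ≤ ε * wnorm d p x ∧
    s = ∑ i, if x i = 0 then 0 else d i * h i }

lemma wnorm_two_eq {n : ℕ} (d : Fin n → ℝ) (x : Fin n → ℂ) :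
    wnorm d 2 x = Real.sqrt (∑ i, d i * ‖x i‖ ^ 2) := by
  unfold wnorm
  rw [Real.sqrt_eq_rpow]
  congr 1
  exact Finset.sum_congr rfl fun i _ => by rw [Real.rpow_two]

lemma wnorm_one_eq {n : ℕ} (d : Fin n → ℝ) (x : Fin n → ℂ) :
    wnorm d 1 x = ∑ i, d i * ‖x i‖ := by
  unfold wnorm
  simp [Real.rpow_one]

noncomputable def zeta {m : ℕ} (τ : Fin m → ℝ) (v : Fin m → ℂ) : EuclideanSpace ℂ (Fin m) :=
  (WithLp.equiv 2 _).symm (fun j => ((Real.sqrt (τ j) : ℝ) : ℂ) * v j)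

lemma zeta_apply {m : ℕ} (τ : Fin m → ℝ) (v : Fin m → ℂ) (j : Fin m) :
    zeta τ v j = ((Real.sqrt (τ j) : ℝ) : ℂ) * v j := rfl

lemma zeta_norm {m : ℕ} (τ : Fin m → ℝ) (hτ : ∀ j, 0 < τ j) (v : Fin m → ℂ) :
    ‖zeta τ v‖ = Real.sqrt (∑ j, τ j * ‖v j‖ ^ 2) := by
  rw [EuclideanSpace.norm_eq]
  congr 1
  refine Finset.sum_congr rfl fun j _ => ?_
  rw [zeta_apply]
  simp [norm_mul, Complex.norm_real,
    abs_of_nonneg (Real.sqrt_nonneg _), mul_pow, Real.sq_sqrt (hτ j).le]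

lemma zeta_sub {m : ℕ} (τ : Fin m → ℝ) (a b : Fin m → ℂ) :
    zeta τ (fun j => a j - b j) = zeta τ a - zeta τ b := by
  ext j
  simp [PiLp.sub_apply, zeta_apply, mul_sub]

lemma term_eq (c : ℝ) (w : ℂ) :
    (c:ℂ) * (starRingEnd ℂ) w * w = ((c * ‖w‖ ^ 2 : ℝ) : ℂ) := by
  rw [mul_assoc, mul_comm ((starRingEnd ℂ) w) w, Complex.mul_conj]
  push_cast [← Complex.sq_norm]
  ring

set_option maxHeartbeats 1000000 in
/-- Quantum L² smooth support uncertainty principle, commutative finite-dimensional case. -/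
theorem quantum_L2_smooth_support_uncertainty {n m : ℕ} (hn : 0 < n) (hm : 0 < m)
    (d : Fin n → ℝ) (τ : Fin m → ℝ) (hd : ∀ i, 0 < d i) (hτ : ∀ j, 0 < τ j)
    (k : ℝ) (hk : 0 < k)
    (F : (Fin n → ℂ) →ₗ[ℂ] (Fin m → ℂ)) (G : (Fin m → ℂ) →ₗ[ℂ] (Fin n → ℂ))
    (hadj : IsAdjointPair d τ F G)
    (hF1 : ∀ x, inorm (F x) ≤ wnorm d 1 x)
    (hFk : ∀ x, k * inorm x ≤ inorm (G (F x)))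
    (hiso : ∀ y, G (F y) = (k : ℂ) • y)
    (x : Fin n → ℂ) (hx : x ≠ 0)
    (ε η : ℝ) (hε : ε ∈ Set.Icc (0:ℝ) 1) (hη : η ∈ Set.Icc (0:ℝ) 1)
    (hεη : ε + η ≤ 1) :
    smoothSupp d 2 ε x * smoothSupp τ 2 η (F x) ≥ k * (1 - ε - η) ^ 2 := by
  obtain ⟨hε0, hε1⟩ := hε
  obtain ⟨hη0, hη1⟩ := hη
  -- Parseval identity
  have key : ∀ v : Fin n → ℂ,
      ∑ j, τ j * ‖F v j‖ ^ 2 = k * ∑ i, d i * ‖v i‖ ^ 2 := by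
    intro v
    have h := hadj v (F v)
    rw [hiso v] at h
    apply Complex.ofReal_injective
    push_cast
    calc ((∑ j, (τ j:ℂ) * (‖F v j‖:ℂ) ^ 2))
        = ∑ j, (τ j : ℂ) * (starRingEnd ℂ) (F v j) * F v j := by
          refine Finset.sum_congr rfl fun j _ => ?_
          rw [term_eq]; push_cast; ring
      _ = ∑ i, (d i : ℂ) * (starRingEnd ℂ) (v i) * ((k:ℂ) • v) i := h
      _ = (k:ℂ) * ∑ i, (d i:ℂ) * (‖v i‖:ℂ) ^ 2 := by
          rw [Finset.mul_sum]
          refine Finset.sum_congr rfl fun i _ => ?_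
          simp only [Pi.smul_apply, smul_eq_mul]
          rw [show (d i : ℂ) * (starRingEnd ℂ) (v i) * ((k:ℂ) * v i)
                = (k:ℂ) * ((d i:ℂ) * (starRingEnd ℂ) (v i) * v i) by ring, term_eq]
          push_cast; ring
  set Px := ∑ i, d i * ‖x i‖ ^ 2 with hPxdef
  have hPx : 0 < Px := by
    obtain ⟨i0, hi0⟩ : ∃ i, x i ≠ 0 := by
      by_contra hcon
      push_neg at hcon
      exact hx (funext hcon)
    refine Finset.sum_pos' (fun i _ => mul_nonneg (hd i).le (sq_nonneg _)) ⟨i0, mem_univ _, ?_⟩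
    have h1 : 0 < ‖x i0‖ := norm_pos_iff.mpr hi0
    exact mul_pos (hd i0) (pow_pos h1 2)
  have hkPx : 0 ≤ k * Px := mul_nonneg hk.le hPx.le
  have hle : ∀ (v : Fin m → ℂ) (j : Fin m), ‖v j‖ ≤ inorm v := by
    intro v j
    unfold inorm
    exact le_ciSup (f := fun i => ‖v i‖) (Set.Finite.bddAbove (Set.finite_range _)) j
  -- the main pairwise bound
  unfold smoothSupp
  set A := { s : ℝ | ∃ h : Fin n → ℝ, (∀ i, 0 ≤ h i) ∧ (∀ i, h i ≤ 1) ∧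
    wnorm d 2 (fun i => ((1 - h i : ℝ) : ℂ) * x i) ≤ ε * wnorm d 2 x ∧
    s = ∑ i, if x i = 0 then 0 else d i * h i } with hA
  set B := { s : ℝ | ∃ g : Fin m → ℝ, (∀ j, 0 ≤ g j) ∧ (∀ j, g j ≤ 1) ∧
    wnorm τ 2 (fun j => ((1 - g j : ℝ) : ℂ) * F x j) ≤ η * wnorm τ 2 (F x) ∧
    s = ∑ j, if F x j = 0 then 0 else τ j * g j } with hB
  have main : ∀ s ∈ A, ∀ t ∈ B, k * (1 - ε - η) ^ 2 ≤ s * t := by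
    rintro s ⟨h, h0, h1, hc, rfl⟩ t ⟨g, g0, g1, gc, rfl⟩
    set g' : Fin m → ℝ := fun j => if F x j = 0 then 0 else g j with hg'
    have g'0 : ∀ j, 0 ≤ g' j := fun j => by
      by_cases hj : F x j = 0 <;> simp [hg', hj, g0 j]
    have g'1 : ∀ j, g' j ≤ 1 := fun j => by
      by_cases hj : F x j = 0 <;> simp [hg', hj, g1 j]
    set h' : Fin n → ℝ := fun i => if x i = 0 then 0 else h i with hh'
    have h'0 : ∀ i, 0 ≤ h' i := fun i => by
      by_cases hi : x i = 0 <;> simp [hh', hi, h0 i]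
    have h'1 : ∀ i, h' i ≤ 1 := fun i => by
      by_cases hi : x i = 0 <;> simp [hh', hi, h1 i]
    have htg : (∑ j, if F x j = 0 then 0 else τ j * g j) = ∑ j, τ j * g' j :=
      Finset.sum_congr rfl fun j _ => by by_cases hj : F x j = 0 <;> simp [hg', hj]
    have hsh : (∑ i, if x i = 0 then 0 else d i * h i) = ∑ i, d i * h' i :=
      Finset.sum_congr rfl fun i _ => by by_cases hi : x i = 0 <;> simp [hh', hi]
    rw [htg, hsh]
    set s' := ∑ i, d i * h' i with hs'def
    set t' := ∑ j, τ j * g' j with ht'def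
    have hs'0 : 0 ≤ s' := Finset.sum_nonneg fun i _ => mul_nonneg (hd i).le (h'0 i)
    have ht'0 : 0 ≤ t' := Finset.sum_nonneg fun j _ => mul_nonneg (hτ j).le (g'0 j)
    set r : Fin n → ℂ := fun i => ((1 - h i : ℝ) : ℂ) * x i with hr
    set w1 : Fin n → ℂ := fun i => ((h i : ℝ) : ℂ) * x i with hw1
    have hsplit : F x = F w1 + F r := by
      rw [← map_add]
      congr 1
      funext i
      simp only [hw1, hr, Pi.add_apply]
      push_cast
      ring
    set va := zeta τ (fun j => ((g' j : ℝ) : ℂ) * F w1 j) with hva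
    set vb := zeta τ (fun j => ((g' j : ℝ) : ℂ) * F x j) with hvb
    set vc := zeta τ (fun j => ((g' j : ℝ) : ℂ) * F r j) with hvc
    have nu : ‖zeta τ (F x)‖ = Real.sqrt (k * Px) := by rw [zeta_norm τ hτ, key x]
    -- lower bound on ‖vb‖
    have e1 : zeta τ (F x) - vb = zeta τ (fun j => ((1 - g j : ℝ) : ℂ) * F x j) := by
      rw [hvb]
      ext j
      simp only [PiLp.sub_apply, zeta_apply]
      by_cases hj : F x j = 0
      · simp [hg', hj]
      · simp only [hg', if_neg hj]
        push_cast
        ring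
    have hub : ‖zeta τ (F x) - vb‖ ≤ η * Real.sqrt (k * Px) := by
      rw [e1, zeta_norm τ hτ]
      rw [wnorm_two_eq, wnorm_two_eq] at gc
      calc Real.sqrt (∑ j, τ j * ‖((1 - g j : ℝ) : ℂ) * F x j‖ ^ 2)
          ≤ η * Real.sqrt (∑ j, τ j * ‖F x j‖ ^ 2) := gc
        _ = η * Real.sqrt (k * Px) := by rw [key x]
    have nvb : (1 - η) * Real.sqrt (k * Px) ≤ ‖vb‖ := by
      have tri : ‖zeta τ (F x)‖ ≤ ‖vb‖ + ‖zeta τ (F x) - vb‖ := by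
        calc ‖zeta τ (F x)‖ = ‖vb + (zeta τ (F x) - vb)‖ := by rw [add_sub_cancel]
          _ ≤ _ := norm_add_le _ _
      rw [nu] at tri
      linarith
    -- upper bound on ‖vc‖
    have nvc : ‖vc‖ ≤ ε * Real.sqrt (k * Px) := by
      rw [hvc, zeta_norm τ hτ]
      have step : (∑ j, τ j * ‖((g' j : ℝ) : ℂ) * F r j‖ ^ 2)
          ≤ ∑ j, τ j * ‖F r j‖ ^ 2 := by
        refine Finset.sum_le_sum fun j _ => ?_
        refine mul_le_mul_of_nonneg_left ?_ (hτ j).le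
        refine pow_le_pow_left₀ (norm_nonneg _) ?_ 2
        rw [norm_mul, Complex.norm_of_nonneg (g'0 j)]
        calc g' j * ‖F r j‖ ≤ 1 * ‖F r j‖ :=
              mul_le_mul_of_nonneg_right (g'1 j) (norm_nonneg _)
          _ = ‖F r j‖ := one_mul _
      rw [wnorm_two_eq, wnorm_two_eq] at hc
      calc Real.sqrt (∑ j, τ j * ‖((g' j : ℝ) : ℂ) * F r j‖ ^ 2)
          ≤ Real.sqrt (∑ j, τ j * ‖F r j‖ ^ 2) := Real.sqrt_le_sqrt step
        _ = Real.sqrt (k * ∑ i, d i * ‖r i‖ ^ 2) := by rw [key r]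
        _ = Real.sqrt k * Real.sqrt (∑ i, d i * ‖r i‖ ^ 2) :=
              Real.sqrt_mul hk.le _
        _ ≤ Real.sqrt k * (ε * Real.sqrt Px) :=
              mul_le_mul_of_nonneg_left hc (Real.sqrt_nonneg _)
        _ = ε * Real.sqrt (k * Px) := by rw [Real.sqrt_mul hk.le]; ring
    -- lower bound on ‖va‖
    have hab : va = vb - vc := by
      rw [hva, hvb, hvc]
      ext j
      simp only [PiLp.sub_apply, zeta_apply]
      rw [hsplit]
      simp only [Pi.add_apply]
      ring
    have nva : (1 - ε - η) * Real.sqrt (k * Px) ≤ ‖va‖ := by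
      have tri : ‖vb‖ ≤ ‖va‖ + ‖vc‖ := by
        have : vb = va + vc := by rw [hab, sub_add_cancel]
        rw [this]
        exact norm_add_le _ _
      linarith
    -- upper bound on ‖va‖²
    set M := ∑ i, d i * (h i * ‖x i‖) with hM
    have hM0 : 0 ≤ M :=
      Finset.sum_nonneg fun i _ =>
        mul_nonneg (hd i).le (mul_nonneg (h0 i) (norm_nonneg _))
    have hFw1 : ∀ j, ‖F w1 j‖ ≤ M := by
      intro j
      refine (hle (F w1) j).trans ((hF1 w1).trans ?_)
      rw [wnorm_one_eq]
      refine le_of_eq (Finset.sum_congr rfl fun i _ => ?_)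
      rw [hw1]
      simp only [norm_mul, Complex.norm_of_nonneg (h0 i)]
    have hva_sq : ‖va‖ ^ 2 ≤ M ^ 2 * t' := by
      rw [hva, zeta_norm τ hτ, Real.sq_sqrt (Finset.sum_nonneg fun j _ =>
        mul_nonneg (hτ j).le (sq_nonneg _))]
      calc (∑ j, τ j * ‖((g' j : ℝ) : ℂ) * F w1 j‖ ^ 2)
          ≤ ∑ j, (τ j * g' j) * M ^ 2 := by
            refine Finset.sum_le_sum fun j _ => ?_
            rw [norm_mul, Complex.norm_of_nonneg (g'0 j), mul_pow, mul_assoc]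
            refine mul_le_mul_of_nonneg_left ?_ (hτ j).le
            have hA0 := norm_nonneg (F w1 j)
            have hAM := hFw1 j
            have q1 : ‖F w1 j‖ ^ 2 ≤ M ^ 2 := pow_le_pow_left₀ hA0 hAM 2
            have q2 : g' j ^ 2 ≤ g' j := by
              rw [sq]; exact mul_le_of_le_one_right (g'0 j) (g'1 j)
            calc g' j ^ 2 * ‖F w1 j‖ ^ 2
                ≤ g' j ^ 2 * M ^ 2 := mul_le_mul_of_nonneg_left q1 (sq_nonneg _)
              _ ≤ g' j * M ^ 2 := mul_le_mul_of_nonneg_right q2 (sq_nonneg M)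
        _ = M ^ 2 * t' := by rw [ht'def, Finset.mul_sum]; exact Finset.sum_congr rfl fun j _ => by ring
    -- Cauchy-Schwarz: M² ≤ s' * Px
    have hM_sq : M ^ 2 ≤ s' * Px := by
      have cs := Finset.sum_mul_sq_le_sq_mul_sq Finset.univ
        (fun i => Real.sqrt (d i * h' i))
        (fun i => Real.sqrt (d i * h' i) * ‖x i‖)
      have e2 : (∑ i, Real.sqrt (d i * h' i) * (Real.sqrt (d i * h' i) * ‖x i‖))
          = M := by
        rw [hM]
        refine Finset.sum_congr rfl fun i _ => ?_
        rw [← mul_assoc, Real.mul_self_sqrt (mul_nonneg (hd i).le (h'0 i))]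
        by_cases hi : x i = 0
        · simp [hi]
        · simp only [hh', if_neg hi]; ring
      have e3 : (∑ i, Real.sqrt (d i * h' i) ^ 2) = s' := by
        rw [hs'def]
        exact Finset.sum_congr rfl fun i _ =>
          Real.sq_sqrt (mul_nonneg (hd i).le (h'0 i))
      have e4 : (∑ i, (Real.sqrt (d i * h' i) * ‖x i‖) ^ 2) ≤ Px := by
        rw [hPxdef]
        refine Finset.sum_le_sum fun i _ => ?_
        rw [mul_pow, Real.sq_sqrt (mul_nonneg (hd i).le (h'0 i))]
        refine mul_le_mul_of_nonneg_right ?_ (sq_nonneg _)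
        nlinarith [h'1 i, (hd i).le, h'0 i]
      rw [e2, e3] at cs
      calc M ^ 2 ≤ s' * ∑ i, (Real.sqrt (d i * h' i) * ‖x i‖) ^ 2 := cs
        _ ≤ s' * Px := mul_le_mul_of_nonneg_left e4 hs'0
    -- combine
    have sq1 : ((1 - ε - η) * Real.sqrt (k * Px)) ^ 2 ≤ ‖va‖ ^ 2 :=
      pow_le_pow_left₀ (mul_nonneg (by linarith) (Real.sqrt_nonneg _)) nva 2
    rw [mul_pow, Real.sq_sqrt hkPx] at sq1
    have final : k * (1 - ε - η) ^ 2 * Px ≤ (s' * t') * Px := by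
      have h5 := mul_le_mul_of_nonneg_right hM_sq ht'0
      nlinarith [sq1, hva_sq]
    exact le_of_mul_le_mul_right final hPx
  -- nonemptiness and nonnegativity
  have hA0 : ∀ a ∈ A, 0 ≤ a := by
    rintro a ⟨h, h0, h1, -, rfl⟩
    refine Finset.sum_nonneg fun i _ => ?_
    by_cases hi : x i = 0
    · simp [hi]
    · simp only [if_neg hi]
      exact mul_nonneg (hd i).le (h0 i)
  have hB0 : ∀ b ∈ B, 0 ≤ b := by
    rintro b ⟨g, g0, g1, -, rfl⟩
    refine Finset.sum_nonneg fun j _ => ?_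
    by_cases hj : F x j = 0
    · simp [hj]
    · simp only [if_neg hj]
      exact mul_nonneg (hτ j).le (g0 j)
  have hAne : A.Nonempty := by
    refine ⟨_, fun _ => 1, fun _ => zero_le_one, fun _ => le_refl 1, ?_, rfl⟩
    rw [wnorm_two_eq, wnorm_two_eq]
    simp only [sub_self, Complex.ofReal_zero, zero_mul, map_zero, norm_zero, ne_eq,
      OfNat.ofNat_ne_zero, not_false_eq_true, zero_pow, mul_zero, Finset.sum_const_zero,
      Real.sqrt_zero]
    exact mul_nonneg hε0 (Real.sqrt_nonneg _)
  have hBne : B.Nonempty := by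
    refine ⟨_, fun _ => 1, fun _ => zero_le_one, fun _ => le_refl 1, ?_, rfl⟩
    rw [wnorm_two_eq, wnorm_two_eq]
    simp only [sub_self, Complex.ofReal_zero, zero_mul, map_zero, norm_zero, ne_eq,
      OfNat.ofNat_ne_zero, not_false_eq_true, zero_pow, mul_zero, Finset.sum_const_zero,
      Real.sqrt_zero]
    exact mul_nonneg hη0 (Real.sqrt_nonneg _)
  have hβ0 : 0 ≤ sInf B := Real.sInf_nonneg hB0
  have step1 : ∀ a ∈ A, k * (1 - ε - η) ^ 2 ≤ a * sInf B := by
    intro a ha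
    have h2 : k * (1 - ε - η) ^ 2 ≤ sInf (a • B) := by
      refine le_csInf (hBne.smul_set) ?_
      rintro b ⟨b', hb', rfl⟩
      simpa using main a ha b' hb'
    rwa [Real.sInf_smul_of_nonneg (hA0 a ha), smul_eq_mul] at h2
  have step2 : k * (1 - ε - η) ^ 2 ≤ sInf B * sInf A := by
    have h2 : k * (1 - ε - η) ^ 2 ≤ sInf (sInf B • A) := by
      refine le_csInf (hAne.smul_set) ?_
      rintro b ⟨a, ha, rfl⟩
      simpa [mul_comm] using step1 a ha
    rwa [Real.sInf_smul_of_nonneg hβ0, smul_eq_mul] at h2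
  rw [ge_iff_le, mul_comm (sInf A) (sInf B)] at *
  exact step2
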